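/- Every partial action of the Taft algebra T_n(q) on its base field k is symmetric; that is, every linear map λ : T_n(q) → k satisfying λ(1) = 1 and λ(h)λ(y) = Σ λ(h₁)λ(h₂y) for all h, y ∈ T_n(q) also satisfies λ(h)λ(y) = Σ λ(h₁y)λ(h₂) for all h, y ∈ T_n(q). (Theorem 3.1.10) -/

import Mathlib

open scoped TensorProduct

/-- The Gaussian binomial coefficient `binom(m, ℓ)_q` in a field `k`, defined by
`binom(0,0)_q = 1`, `binom(m,ℓ)_q = 0` for `ℓ < 0` or `ℓ > m`, and the q-Pascal rule
`binom(i,s)_q = binom(i-1,s-1)_q + q^s · binom(i-1,s)_q` for `i ≥ 1`. -/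
def qbinom {k : Type*} [Field k] (q : k) : ℕ → ℤ → k
  | 0, s => if s = 0 then 1 else 0
  | (i + 1), s => qbinom q i (s - 1) + q ^ s.toNat * qbinom q i s

/-- The q-number `(m)_q = 1 + q + ⋯ + q^{m−1}`. -/
def qnum {k : Type*} [Field k] (q : k) (m : ℕ) : k := ∑ l ∈ Finset.range m, q ^ l

/-- The q-factorial `(m)_q! = (m)_q (m−1)_q ⋯ (1)_q`, with `(0)_q! = 1`. -/
def qfact {k : Type*} [Field k] (q : k) : ℕ → k
  | 0 => 1
  | (m + 1) => qnum q (m + 1) * qfact q m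

/-- The linear map `h ↦ Σ λ(h₁) h₂` (Sweedler notation). -/
noncomputable def lCont (k H : Type*) [CommSemiring k] [Semiring H] [Bialgebra k H]
    (lam : H →ₗ[k] k) : H →ₗ[k] H :=
  (TensorProduct.lid k H).toLinearMap ∘ₗ TensorProduct.map lam LinearMap.id ∘ₗ Coalgebra.comul

/-- The linear map `h ↦ Σ h₁ λ(h₂)` (Sweedler notation). -/
noncomputable def rCont (k H : Type*) [CommSemiring k] [Semiring H] [Bialgebra k H]
    (lam : H →ₗ[k] k) : H →ₗ[k] H :=
  (TensorProduct.rid k H).toLinearMap ∘ₗ TensorProduct.map LinearMap.id lam ∘ₗ Coalgebra.comul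

/-- A partial action of a bialgebra `H` on its base field `k`: a linear map `λ : H → k` with
`λ(1) = 1` and `λ(h)λ(y) = Σ λ(h₁)λ(h₂y)` for all `h, y ∈ H`; by linearity the right-hand side
is `λ((Σ λ(h₁) h₂) · y)`. -/
def IsPartialAction (k H : Type*) [CommSemiring k] [Semiring H] [Bialgebra k H]
    (lam : H →ₗ[k] k) : Prop :=
  lam 1 = 1 ∧ ∀ h y : H, lam h * lam y = lam (lCont k H lam h * y)

/-- A symmetric partial action additionally satisfies `λ(h)λ(y) = Σ λ(h₁y)λ(h₂)`, i.e.
`λ(h)λ(y) = λ((Σ h₁ λ(h₂)) · y)`. -/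
def IsSymmPartialAction (k H : Type*) [CommSemiring k] [Semiring H] [Bialgebra k H]
    (lam : H →ₗ[k] k) : Prop :=
  IsPartialAction k H lam ∧ ∀ h y : H, lam h * lam y = lam (rCont k H lam h * y)

/-- A realization of the Taft algebra `T_n(q)`: a Hopf algebra `H` over `k` with generators
`g, x` satisfying `g^n = 1`, `x^n = 0`, `xg = q·gx`, such that `{g^i x^j : 0 ≤ i,j ≤ n−1}` is a
`k`-basis, `g` is group-like and `x` is `(1,g)`-primitive. -/
structure TaftData (k : Type*) [Field k] (n : ℕ) (q : k) (H : Type*)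
    [Ring H] [HopfAlgebra k H] where
  g : H
  x : H
  g_pow_n : g ^ n = 1
  x_pow_n : x ^ n = 0
  x_mul_g : x * g = q • (g * x)
  basis : Module.Basis (Fin n × Fin n) k H
  basis_eq : ∀ i j : Fin n, basis (i, j) = g ^ (i : ℕ) * x ^ (j : ℕ)
  comul_g : Coalgebra.comul (R := k) g = g ⊗ₜ[k] g
  comul_x : Coalgebra.comul (R := k) x = x ⊗ₜ[k] (1 : H) + g ⊗ₜ[k] x
  counit_g : Coalgebra.counit (R := k) g = 1
  counit_x : Coalgebra.counit (R := k) x = 0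

section ThmAux

variable {k H : Type*} [Field k] [Ring H] [HopfAlgebra k H]

/-- Auxiliary map: `Phi f t = (rid) ((id ⊗ f) t)`, i.e. `Σ f(t₂) t₁`. -/
noncomputable def Phi (f : H →ₗ[k] k) (t : H ⊗[k] H) : H :=
  (TensorProduct.rid k H) (TensorProduct.map LinearMap.id f t)

lemma Phi_tmul (f : H →ₗ[k] k) (a b : H) : Phi f (a ⊗ₜ[k] b) = f b • a := by
  simp [Phi]

lemma Phi_add (f : H →ₗ[k] k) (t₁ t₂ : H ⊗[k] H) :
    Phi f (t₁ + t₂) = Phi f t₁ + Phi f t₂ := by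
  simp [Phi]

lemma rCont_eq_Phi (lam : H →ₗ[k] k) (h : H) :
    rCont k H lam h = Phi lam (Coalgebra.comul h) := rfl

lemma Phi_tensor_mul (f : H →ₗ[k] k) (p r : H) (t : H ⊗[k] H) :
    Phi f ((p ⊗ₜ[k] r) * t) = p * Phi (f ∘ₗ LinearMap.mulLeft k r) t := by
  induction t using TensorProduct.induction_on with
  | zero => simp [Phi]
  | tmul a b =>
      simp [Phi, Algebra.TensorProduct.tmul_mul_tmul, mul_smul_comm]
  | add t₁ t₂ h₁ h₂ =>
      rw [mul_add, Phi_add, Phi_add, h₁, h₂, mul_add]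

lemma Phi_sub_smul (c : k) (f₁ f₂ : H →ₗ[k] k) (t : H ⊗[k] H) :
    Phi (c • f₁ - c • f₂) t = c • Phi f₁ t - c • Phi f₂ t := by
  induction t using TensorProduct.induction_on with
  | zero => simp [Phi]
  | tmul a b =>
      simp only [Phi_tmul, LinearMap.sub_apply, LinearMap.smul_apply, smul_eq_mul,
        sub_smul, mul_smul]
  | add t₁ t₂ h₁ h₂ =>
      rw [Phi_add, Phi_add, Phi_add, h₁, h₂, smul_add, smul_add]
      abel

end ThmAux

/-- Theorem 3.1.10: every partial action of the Taft algebra `T_n(q)` on its base field `k`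
is symmetric: every linear map `λ : T_n(q) → k` with `λ(1) = 1` and
`λ(h)λ(y) = Σ λ(h₁)λ(h₂y)` for all `h, y` also satisfies `λ(h)λ(y) = Σ λ(h₁y)λ(h₂)`
for all `h, y`. -/
theorem thm_3_1_10 {k H : Type*} [Field k] [Ring H] [HopfAlgebra k H]
    {n : ℕ} (hn : 2 ≤ n) {q : k} (hq : IsPrimitiveRoot q n)
    (T : TaftData k n q H) (lam : H →ₗ[k] k)
    (hlam : IsPartialAction k H lam) :
    IsSymmPartialAction k H lam := by
  obtain ⟨hlam1, hlamE⟩ := hlam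
  have hq0 : q ≠ 0 := hq.ne_zero (by omega)
  set g : H := T.g with hgdef
  set x : H := T.x with hxdef
  set u : H := g ^ (n - 1) with hu
  set w : H := u * x with hw
  set c : k := lam w with hc
  -- `u * g = 1`
  have hun : u * g = 1 := by
    rw [hu, ← pow_succ]
    have : n - 1 + 1 = n := by omega
    rw [this, T.g_pow_n]
  -- comultiplication of powers of `g`
  have comul_gpow : ∀ m : ℕ,
      Coalgebra.comul (R := k) (g ^ m) = (g ^ m) ⊗ₜ[k] (g ^ m) := by
    intro m
    rw [Bialgebra.comul_pow, T.comul_g, Algebra.TensorProduct.tmul_pow]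
  have comul_u : Coalgebra.comul (R := k) u = u ⊗ₜ[k] u := comul_gpow _
  have comul_w : Coalgebra.comul (R := k) w = w ⊗ₜ[k] u + (1 : H) ⊗ₜ[k] w := by
    rw [hw, Bialgebra.comul_mul, comul_u, T.comul_x, mul_add,
      Algebra.TensorProduct.tmul_mul_tmul, Algebra.TensorProduct.tmul_mul_tmul,
      mul_one, hun]
  -- `lCont` of `w`
  have lCont_w : lCont k H lam w = c • u + w := by
    simp only [lCont, LinearMap.comp_apply, LinearEquiv.coe_coe, comul_w, map_add,
      TensorProduct.map_tmul, LinearMap.id_coe, id_eq, TensorProduct.lid_tmul, hlam1]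
    rw [one_smul, ← hc]
  -- master identity (M)
  have M : ∀ z : H, lam (w * z) = c * lam z - c * lam (u * z) := by
    intro z
    have h1 := hlamE w z
    rw [lCont_w, add_mul, smul_mul_assoc, map_add, map_smul, smul_eq_mul, ← hc] at h1
    linear_combination -h1
  have Mfun : (lam ∘ₗ LinearMap.mulLeft k w)
      = c • lam - c • (lam ∘ₗ LinearMap.mulLeft k u) := by
    ext z
    simp only [LinearMap.comp_apply, LinearMap.mulLeft_apply, LinearMap.sub_apply,
      LinearMap.smul_apply, smul_eq_mul]
    exact M z
  -- the auxiliary contraction `RCu`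
  set RCu : H → H := fun h => Phi (lam ∘ₗ LinearMap.mulLeft k u) (Coalgebra.comul h)
    with hRCu
  have F1 : ∀ h : H, rCont k H lam (u * h) = u * RCu h := by
    intro h
    rw [rCont_eq_Phi, Bialgebra.comul_mul, comul_u, Phi_tensor_mul]
  have F2 : ∀ h : H,
      rCont k H lam (w * h) = w * RCu h + (c • rCont k H lam h - c • RCu h) := by
    intro h
    rw [rCont_eq_Phi, Bialgebra.comul_mul, comul_w, add_mul, Phi_add,
      Phi_tensor_mul, Phi_tensor_mul, Mfun, Phi_sub_smul, one_mul, rCont_eq_Phi]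
  -- the induction step
  have Sstep : ∀ h' : H,
      (∀ y : H, lam h' * lam y = lam (rCont k H lam h' * y)) →
      (∀ y : H, lam (u * h') * lam y = lam (rCont k H lam (u * h') * y)) →
      ∀ y : H, lam (w * h') * lam y = lam (rCont k H lam (w * h') * y) := by
    intro h' S1 S2 y
    have expand : lam (rCont k H lam (w * h') * y)
        = lam (w * (RCu h' * y)) + (c * lam (rCont k H lam h' * y)
            - c * lam (RCu h' * y)) := by
      rw [F2, add_mul, sub_mul, smul_mul_assoc, smul_mul_assoc, map_add, map_sub,
        map_smul, map_smul, smul_eq_mul, smul_eq_mul, mul_assoc]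
    have hF1y : u * RCu h' * y = rCont k H lam (u * h') * y := by rw [F1]
    rw [expand, M (RCu h' * y), ← mul_assoc, hF1y]
    have hM := M h'
    linear_combination (-c : k) * S2 y + c * S1 y + lam y * hM
  -- main induction on the `x`-degree
  have main : ∀ (j i : ℕ) (y : H),
      lam (g ^ i * x ^ j) * lam y = lam (rCont k H lam (g ^ i * x ^ j) * y) := by
    intro j
    induction j with
    | zero =>
        intro i y
        rw [pow_zero, mul_one]
        have hl : lCont k H lam (g ^ i) = lam (g ^ i) • g ^ i := by
          simp only [lCont, LinearMap.comp_apply, LinearEquiv.coe_coe, comul_gpow i,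
            TensorProduct.map_tmul, LinearMap.id_coe, id_eq, TensorProduct.lid_tmul]
        have hr : rCont k H lam (g ^ i) = lam (g ^ i) • g ^ i := by
          simp only [rCont, LinearMap.comp_apply, LinearEquiv.coe_coe, comul_gpow i,
            TensorProduct.map_tmul, LinearMap.id_coe, id_eq, TensorProduct.rid_tmul]
        have hpe := hlamE (g ^ i) y
        rw [hl, smul_mul_assoc, map_smul, smul_eq_mul] at hpe
        rw [hr, smul_mul_assoc, map_smul, smul_eq_mul]
        exact hpe
    | succ j ih =>
        intro i y
        have xgpow : ∀ m : ℕ, x * g ^ m = q ^ m • (g ^ m * x) := by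
          intro m
          induction m with
          | zero => simp
          | succ m ihm =>
              rw [pow_succ, ← mul_assoc, ihm, smul_mul_assoc, mul_assoc, T.x_mul_g,
                mul_smul_comm, smul_smul, ← mul_assoc, ← pow_succ]
        have key : w * (g ^ (i + 1) * x ^ j) = q ^ (i + 1) • (g ^ i * x ^ (j + 1)) := by
          calc w * (g ^ (i + 1) * x ^ j) = u * (x * g ^ (i + 1)) * x ^ j := by
                rw [hw, mul_assoc, ← mul_assoc x, ← mul_assoc u, ← mul_assoc]
            _ = q ^ (i + 1) • (u * (g ^ (i + 1) * x) * x ^ j) := by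
                rw [xgpow (i + 1), mul_smul_comm, smul_mul_assoc]
            _ = q ^ (i + 1) • (g ^ i * x ^ (j + 1)) := by
                congr 1
                have h2 : u * g ^ (i + 1) = g ^ i := by
                  rw [hu, ← pow_add]
                  have h3 : n - 1 + (i + 1) = n + i := by omega
                  rw [h3, pow_add, T.g_pow_n, one_mul]
                rw [← mul_assoc u (g ^ (i + 1)) x, h2, mul_assoc, ← pow_succ']
        have S2 : ∀ y' : H, lam (u * (g ^ (i + 1) * x ^ j)) * lam y'
            = lam (rCont k H lam (u * (g ^ (i + 1) * x ^ j)) * y') := by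
          intro y'
          have hrw : u * (g ^ (i + 1) * x ^ j) = g ^ (n + i) * x ^ j := by
            rw [← mul_assoc, hu, ← pow_add]
            congr 2
            omega
          rw [hrw]
          exact ih (n + i) y'
        have S3 := Sstep (g ^ (i + 1) * x ^ j) (ih (i + 1)) S2 y
        rw [key, map_smul, smul_eq_mul, map_smul, smul_mul_assoc, map_smul,
          smul_eq_mul, mul_assoc] at S3
        exact mul_left_cancel₀ (pow_ne_zero _ hq0) S3
  -- conclude by linearity
  refine ⟨⟨hlam1, hlamE⟩, ?_⟩
  intro h y
  have hmaps : (lam y • lam)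
      = lam ∘ₗ (LinearMap.mulRight k y) ∘ₗ rCont k H lam := by
    apply T.basis.ext
    rintro ⟨i, j⟩
    rw [T.basis_eq]
    simp only [LinearMap.smul_apply, smul_eq_mul, LinearMap.comp_apply,
      LinearMap.mulRight_apply]
    rw [mul_comm]
    exact main (j : ℕ) (i : ℕ) y
  have hfin := LinearMap.congr_fun hmaps h
  simp only [LinearMap.smul_apply, smul_eq_mul, LinearMap.comp_apply,
    LinearMap.mulRight_apply] at hfin
  rw [mul_comm (lam y) (lam h)] at hfin
  exact hfin
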